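/- The Desargues theorem holds in the projective plane over a field: if two triangles A₁A₂A₃ and B₁B₂B₃ are in general position and the three lines A₁B₁, A₂B₂, A₃B₃ are concurrent, then the three points C₃ = (A₁A₂) ∩ (B₁B₂), C₁ = (A₂A₃) ∩ (B₂B₃), and C₂ = (A₁A₃) ∩ (B₁B₃) are collinear. -/

import Mathlib

open Matrix

private lemma desargues_det_identity {k : Type*} [CommRing k]
    (A₁ A₂ A₃ B₁ B₂ B₃ : Fin 3 → k) :
    (Matrix.of ![crossProduct (crossProduct A₂ A₃) (crossProduct B₂ B₃),
        crossProduct (crossProduct A₁ A₃) (crossProduct B₁ B₃),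
        crossProduct (crossProduct A₁ A₂) (crossProduct B₁ B₂)]).det
    = (Matrix.of ![A₁, A₂, A₃]).det * (Matrix.of ![B₁, B₂, B₃]).det *
      (Matrix.of ![crossProduct A₁ B₁, crossProduct A₂ B₂, crossProduct A₃ B₃]).det := by
  simp only [det_fin_three, crossProduct, LinearMap.mk₂_apply, Matrix.of_apply,
    Matrix.cons_val', Matrix.cons_val_zero, Matrix.cons_val_one, Matrix.head_cons,
    Matrix.empty_val', Matrix.cons_val_fin_one, Matrix.head_fin_const, Matrix.cons_val_two,
    Matrix.tail_cons]
  ring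

/-- The Desargues theorem in the projective plane over a field `k`, with points represented by
nonzero vectors of `k³` up to scalar.  If the triangles `A₁A₂A₃` and `B₁B₂B₃` are in general
position and the lines `A₁B₁`, `A₂B₂`, `A₃B₃` (given by cross products) are concurrent, then
the points `C₃ = (A₁A₂) ∩ (B₁B₂)`, `C₁ = (A₂A₃) ∩ (B₂B₃)`, `C₂ = (A₁A₃) ∩ (B₁B₃)` are
collinear. -/
theorem desargues_projective_plane {k : Type*} [Field k]
    (A₁ A₂ A₃ B₁ B₂ B₃ : Fin 3 → k)
    -- general position: nondegenerate triangles
    (hA : LinearIndependent k ![A₁, A₂, A₃])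
    (hB : LinearIndependent k ![B₁, B₂, B₃])
    -- the lines AᵢBᵢ are well defined
    (h₁ : crossProduct A₁ B₁ ≠ 0) (h₂ : crossProduct A₂ B₂ ≠ 0) (h₃ : crossProduct A₃ B₃ ≠ 0)
    -- the lines A₁B₁, A₂B₂, A₃B₃ are concurrent
    (hconc : ¬ LinearIndependent k ![crossProduct A₁ B₁, crossProduct A₂ B₂, crossProduct A₃ B₃])
    (C₁ C₂ C₃ : Fin 3 → k)
    (hC₃ : C₃ = crossProduct (crossProduct A₁ A₂) (crossProduct B₁ B₂))
    (hC₁ : C₁ = crossProduct (crossProduct A₂ A₃) (crossProduct B₂ B₃))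
    (hC₂ : C₂ = crossProduct (crossProduct A₁ A₃) (crossProduct B₁ B₃))
    (hC₁0 : C₁ ≠ 0) (hC₂0 : C₂ ≠ 0) (hC₃0 : C₃ ≠ 0) :
    ¬ LinearIndependent k ![C₁, C₂, C₃] := by
  have key : ∀ (u v w : Fin 3 → k),
      LinearIndependent k ![u, v, w] ↔ (Matrix.of ![u, v, w]).det ≠ 0 := by
    intro u v w
    rw [show (![u, v, w] : Fin 3 → Fin 3 → k) = (Matrix.of ![u, v, w]).row from rfl,
      linearIndependent_rows_iff_isUnit, Matrix.isUnit_iff_isUnit_det, isUnit_iff_ne_zero]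
    rfl
  rw [key] at hconc ⊢
  push_neg at hconc
  rw [hC₁, hC₂, hC₃, desargues_det_identity, hconc, mul_zero]
  simp
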